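/- Let α < 0, ε > 0 and h > 0 be fixed. For η ∈ ℝ and τ = h + iη, let μ(τ) denote the unique root of λ³ − ετλ − τ/α = 0 with Re μ(τ) < 0. Then there exist positive constants η₀ and C such that for all η with |η| ≥ η₀ one has |τ| ≤ C·|μ(τ)|². -/

import Mathlib

/-- For the root `μ(τ)` of `λ³ - ετλ - τ/α = 0` with negative real part (`τ = h + iη`),
one has `|τ| ≤ C·|μ(τ)|²` for `|η|` large. -/
theorem stmt4 (α ε h : ℝ) (hα : α < 0) (hε : 0 < ε) (hh : 0 < h)
    (μ : ℝ → ℂ)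
    (hroot : ∀ η : ℝ,
      (μ η) ^ 3 - (ε : ℂ) * ((h : ℂ) + (η : ℂ) * Complex.I) * (μ η)
        - ((h : ℂ) + (η : ℂ) * Complex.I) / (α : ℂ) = 0)
    (hneg : ∀ η : ℝ, (μ η).re < 0) :
    ∃ η₀ C : ℝ, 0 < η₀ ∧ 0 < C ∧ ∀ η : ℝ, η₀ ≤ |η| →
      ‖(h : ℂ) + (η : ℂ) * Complex.I‖ ≤ C * ‖μ η‖ ^ 2 := by
  refine ⟨1, 2 / ε, one_pos, by positivity, fun η _ => ?_⟩
  set τ : ℂ := (h : ℂ) + (η : ℂ) * Complex.I with hτ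
  set m : ℂ := μ η with hm
  have hα0 : (α : ℂ) ≠ 0 := by
    exact_mod_cast (show (α : ℝ) ≠ 0 from ne_of_lt hα)
  -- rewrite the root equation
  have heq : m ^ 3 = τ * ((ε : ℂ) * m + 1 / (α : ℂ)) := by
    linear_combination hroot η
  -- μ ≠ 0
  have hmre : m.re < 0 := hneg η
  have hm0 : m ≠ 0 := fun h0 => by simp [h0] at hmre
  have habsm : 0 < ‖m‖ := norm_pos_iff.mpr hm0
  -- lower bound: |εm + 1/α| ≥ ε|m|/2
  have hkey : ε * ‖m‖ ≤ 2 * ‖(ε : ℂ) * m + 1 / (α : ℂ)‖ := by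
    have h1 : ((ε : ℂ) * m + 1 / (α : ℂ)).re = ε * m.re + 1 / α := by
      simp [Complex.add_re, Complex.div_re, Complex.mul_re]
    have h2 : ((ε : ℂ) * m + 1 / (α : ℂ)).im = ε * m.im := by
      simp [Complex.add_im, Complex.div_im, Complex.mul_im]
    have hre : ε * (-m.re) ≤ |((ε : ℂ) * m + 1 / (α : ℂ)).re| := by
      rw [h1, abs_of_nonpos]
      · have : 1 / α ≤ 0 := by
          apply div_nonpos_of_nonneg_of_nonpos <;> linarith
        nlinarith
      · have : 1 / α ≤ 0 := by
          apply div_nonpos_of_nonneg_of_nonpos <;> linarith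
        nlinarith
    have him : ε * |m.im| ≤ |((ε : ℂ) * m + 1 / (α : ℂ)).im| := by
      rw [h2, abs_mul, abs_of_pos hε]
    have hre' : |((ε : ℂ) * m + 1 / (α : ℂ)).re| ≤ ‖(ε : ℂ) * m + 1 / (α : ℂ)‖ :=
      Complex.abs_re_le_norm _
    have him' : |((ε : ℂ) * m + 1 / (α : ℂ)).im| ≤ ‖(ε : ℂ) * m + 1 / (α : ℂ)‖ :=
      Complex.abs_im_le_norm _
    have htri : ‖m‖ ≤ |m.re| + |m.im| := Complex.norm_le_abs_re_add_abs_im m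
    have : |m.re| = -m.re := abs_of_neg hmre
    nlinarith [hε.le, abs_nonneg m.im]
  -- |m|^3 = |τ| * |εm + 1/α|
  have habs : ‖m‖ ^ 3 = ‖τ‖ * ‖(ε : ℂ) * m + 1 / (α : ℂ)‖ := by
    rw [← norm_pow, heq, norm_mul]
  have hτnn : 0 ≤ ‖τ‖ := norm_nonneg _
  -- conclude
  have h3 : ε * (‖τ‖ * ‖m‖) ≤ 2 * ‖m‖ ^ 3 := by
    rw [habs]
    calc ε * (‖τ‖ * ‖m‖)
        = ‖τ‖ * (ε * ‖m‖) := by ring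
      _ ≤ ‖τ‖ * (2 * ‖(ε : ℂ) * m + 1 / (α : ℂ)‖) :=
          mul_le_mul_of_nonneg_left hkey hτnn
      _ = 2 * (‖τ‖ * ‖(ε : ℂ) * m + 1 / (α : ℂ)‖) := by ring
  rw [div_mul_eq_mul_div, le_div_iff₀ hε]
  nlinarith [habsm]
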